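/- Suppose W isolates the minimum-weight matching M_k of size k. Then W isolates a matching of size k+1 (i.e., there is a unique minimum-weight matching of size k+1) if and only if there is a unique minimum-alternating-weight augmenting path with respect to M_k. -/

import Mathlib

variable {V : Type*} [DecidableEq V]

/-- `M` is a matching in the graph with edge set `E`: a set of edges of `E`
such that no two distinct edges share a vertex. -/
def IsMatching (E M : Finset (Sym2 V)) : Prop :=
  M ⊆ E ∧ ∀ e ∈ M, ∀ f ∈ M, e ≠ f → ∀ v, v ∈ e → v ∉ f

/-- The list of edges of the path given by the vertex list `l`. -/
def pathEdges (l : List V) : List (Sym2 V) :=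
  (l.zip l.tail).map fun p => s(p.1, p.2)

/-- `l` is (the vertex list of) an augmenting path with respect to the matching `M` in the
graph with edge set `E`: a path (distinct vertices, consecutive pairs forming edges of `E`)
with an odd number of edges, alternating between edges outside `M` (the even-indexed, in
particular the first and last) and edges of `M` (the odd-indexed), whose two endpoints are
unmatched by `M`. -/
def IsAugPath (E M : Finset (Sym2 V)) (l : List V) : Prop :=
  2 ≤ l.length ∧ l.Nodup ∧
    (∀ e ∈ pathEdges l, e ∈ E) ∧
    (pathEdges l).length % 2 = 1 ∧
    (∀ i (h : i < (pathEdges l).length), ((pathEdges l)[i] ∈ M ↔ i % 2 = 1)) ∧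
    (∀ e ∈ M, (∀ a, l.head? = some a → a ∉ e) ∧ (∀ a, l.getLast? = some a → a ∉ e))

/-- The weight of a set of edges. -/
def wt (W : Sym2 V → ℤ) (F : Finset (Sym2 V)) : ℤ := ∑ e ∈ F, W e

/-- `W` isolates the matching `M` of size `k`: `M` is a matching of size `k` and every
other matching of size `k` has strictly larger weight. -/
def Isolates (W : Sym2 V → ℤ) (E : Finset (Sym2 V)) (k : ℕ) (M : Finset (Sym2 V)) : Prop :=
  IsMatching E M ∧ M.card = k ∧
    ∀ M', IsMatching E M' → M'.card = k → M' ≠ M → wt W M < wt W M'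

/-- `M` is a minimum-weight matching of size `j`. -/
def MinOfSize (W : Sym2 V → ℤ) (E : Finset (Sym2 V)) (j : ℕ) (M : Finset (Sym2 V)) : Prop :=
  IsMatching E M ∧ M.card = j ∧
    ∀ M', IsMatching E M' → M'.card = j → wt W M ≤ wt W M'

/-- The edge set `E` is bipartite with left part `L`. -/
def Bipartite (E : Finset (Sym2 V)) (L : Finset V) : Prop :=
  ∀ e ∈ E, ∃ u ∈ L, ∃ v, v ∉ L ∧ e = s(u, v)

/-- The alternating weight of a path with respect to the matching `M`: edges outside `M`
count positively and edges of `M` count negatively. -/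
def altWeight (W : Sym2 V → ℤ) (M : Finset (Sym2 V)) (l : List V) : ℤ :=
  ((pathEdges l).map fun e => if e ∈ M then -W e else W e).sum

/-- `l` is a minimum-alternating-weight augmenting path with respect to `M`. -/
def MinAugPath (W : Sym2 V → ℤ) (E M : Finset (Sym2 V)) (l : List V) : Prop :=
  IsAugPath E M l ∧ ∀ l', IsAugPath E M l' → altWeight W M l ≤ altWeight W M l'

section AuxLemmas
set_option linter.unusedSectionVars false
set_option maxHeartbeats 1000000
variable {V : Type*} [DecidableEq V]
variable {E M Mk A B : Finset (Sym2 V)} {W : Sym2 V → ℤ}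

lemma pathEdges_nil : pathEdges ([] : List V) = [] := rfl

lemma pathEdges_single (a : V) : pathEdges [a] = [] := rfl

lemma pathEdges_cons (a b : V) (t : List V) :
    pathEdges (a :: b :: t) = s(a, b) :: pathEdges (b :: t) := by
  simp [pathEdges]

lemma pathEdges_length (l : List V) : (pathEdges l).length = l.length - 1 := by
  simp [pathEdges]

lemma vertex_mem_of_mem_pathEdges {l : List V} {e : Sym2 V} {x : V}
    (he : e ∈ pathEdges l) (hx : x ∈ e) : x ∈ l := by
  induction l with
  | nil => simp [pathEdges_nil] at he
  | cons a t ih =>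
    match t with
    | [] => simp [pathEdges_single] at he
    | b :: t' =>
      rw [pathEdges_cons] at he
      rcases List.mem_cons.1 he with h | h
      · subst h
        rcases Sym2.mem_iff.1 hx with rfl | rfl
        · exact List.mem_cons_self
        · exact List.mem_cons_of_mem _ (List.mem_cons_self)
      · exact List.mem_cons_of_mem _ (ih h)

lemma exists_pathEdge_of_mem {l : List V} {x : V} (hx : x ∈ l) (hl : 2 ≤ l.length) :
    ∃ e ∈ pathEdges l, x ∈ e := by
  induction l with
  | nil => simp at hx
  | cons a t ih =>
    match t with
    | [] => simp at hl
    | b :: t' =>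
      rw [pathEdges_cons]
      rcases List.mem_cons.1 hx with rfl | h
      · exact ⟨s(x, b), List.mem_cons_self, Sym2.mem_mk_left _ _⟩
      · match t' with
        | [] =>
          simp only [List.mem_singleton] at h; subst h
          exact ⟨s(a, x), List.mem_cons_self, Sym2.mem_mk_right _ _⟩
        | c :: t'' =>
          obtain ⟨e, he, hxe⟩ := ih h (by simp)
          exact ⟨e, List.mem_cons_of_mem _ he, hxe⟩

lemma pathEdges_nodup {l : List V} (h : l.Nodup) : (pathEdges l).Nodup := by
  induction l with
  | nil => simp [pathEdges_nil]
  | cons a t ih =>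
    match t with
    | [] => simp [pathEdges_single]
    | b :: t' =>
      rw [pathEdges_cons]
      refine List.nodup_cons.2 ⟨fun hmem => ?_, ih (List.nodup_cons.1 h).2⟩
      have : a ∈ (b :: t') := vertex_mem_of_mem_pathEdges hmem (Sym2.mem_mk_left _ _)
      exact (List.nodup_cons.1 h).1 this

lemma head_edge_unique {v w : V} {t : List V} {f : Sym2 V}
    (hnd : (v :: w :: t).Nodup) (hf : f ∈ pathEdges (v :: w :: t)) (hv : v ∈ f) :
    f = s(v, w) := by
  rw [pathEdges_cons] at hf
  rcases List.mem_cons.1 hf with h | h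
  · exact h
  · exact absurd (vertex_mem_of_mem_pathEdges h hv) (List.nodup_cons.1 hnd).1

lemma matching_subset {M' : Finset (Sym2 V)} (hsub : M' ⊆ M) (hM : IsMatching E M) :
    IsMatching E M' :=
  ⟨hsub.trans hM.1, fun e he f hf => hM.2 e (hsub he) f (hsub hf)⟩

/-- Alternating walk: edges alternate between `A \ B` and `B \ A` (roles swap at each
step), ending at a vertex uncovered by the side whose turn it is. -/
def Walk2 (A B : Finset (Sym2 V)) : List V → Prop
  | [] => False
  | [v] => ∀ e ∈ A, v ∉ e
  | u :: v :: t => s(u, v) ∈ A \ B ∧ u ≠ v ∧ Walk2 B A (v :: t)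

lemma Walk2.ne_nil {l : List V} (h : Walk2 A B l) : l ≠ [] := by
  intro hl; subst hl; exact h

lemma Walk2.edges_subset {l : List V} (h : Walk2 A B l) :
    ∀ e ∈ pathEdges l, e ∈ (A \ B) ∪ (B \ A) := by
  induction l generalizing A B with
  | nil => exact absurd h (by simp [Walk2])
  | cons u t ih =>
    match t with
    | [] => simp [pathEdges_single]
    | v :: t' =>
      obtain ⟨h1, _, h3⟩ := h
      intro e he
      rw [pathEdges_cons] at he
      rcases List.mem_cons.1 he with rfl | he'
      · exact Finset.mem_union_left _ h1
      · rcases Finset.mem_union.1 (ih h3 e he') with h | h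
        · exact Finset.mem_union_right _ h
        · exact Finset.mem_union_left _ h
lemma Walk2.indexed {l : List V} (h : Walk2 A B l) :
    ∀ i (hi : i < (pathEdges l).length),
      if i % 2 = 0 then (pathEdges l)[i] ∈ A \ B else (pathEdges l)[i] ∈ B \ A := by
  induction l generalizing A B with
  | nil => exact absurd h (by simp [Walk2])
  | cons u t ih =>
    match t with
    | [] => intro i hi; simp [pathEdges_single] at hi
    | v :: t' =>
      obtain ⟨h1, _, h3⟩ := h
      intro i hi
      match i with
      | 0 => simpa [pathEdges_cons] using h1
      | (i+1) =>
        have hi' : i < (pathEdges (v :: t')).length := by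
          rw [pathEdges_cons] at hi; simpa using hi
        have hh := ih h3 i hi'
        have hge : (pathEdges (u :: v :: t'))[i+1]'hi = (pathEdges (v :: t'))[i]'hi' := by
          simp [pathEdges_cons]
        rcases Nat.mod_two_eq_zero_or_one i with h2 | h2
        · rw [if_pos h2] at hh
          rw [if_neg (by omega : ¬ (i+1) % 2 = 0), hge]
          exact hh
        · rw [if_neg (by simp [h2])] at hh
          rw [if_pos (by omega : (i+1) % 2 = 0), hge]
          exact hh

lemma Walk2.last_cond {l : List V} (h : Walk2 A B l) :
    (l.length % 2 = 0 → ∀ e ∈ B, ∀ a, l.getLast? = some a → a ∉ e) ∧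
    (l.length % 2 = 1 → ∀ e ∈ A, ∀ a, l.getLast? = some a → a ∉ e) := by
  induction l generalizing A B with
  | nil => exact absurd h (by simp [Walk2])
  | cons u t ih =>
    match t with
    | [] =>
      constructor
      · intro h0; simp at h0
      · intro _ e he a ha hae
        simp only [List.getLast?_singleton, Option.some_inj] at ha
        subst ha
        exact h e he hae
    | v :: t' =>
      obtain ⟨_, _, h3⟩ := h
      have IH := ih h3
      have hlen : (u :: v :: t').length = (v :: t').length + 1 := rfl
      constructor
      · intro h0 e he a ha
        rw [List.getLast?_cons_cons] at ha
        exact IH.2 (by omega) e he a ha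
      · intro h0 e he a ha
        rw [List.getLast?_cons_cons] at ha
        exact IH.1 (by omega) e he a ha

lemma Walk2.ofIndexed : ∀ (l : List V) (A B : Finset (Sym2 V)), l ≠ [] →
    (∀ e ∈ pathEdges l, ¬ e.IsDiag) →
    (∀ i (hi : i < (pathEdges l).length),
      if i % 2 = 0 then (pathEdges l)[i] ∈ A \ B else (pathEdges l)[i] ∈ B \ A) →
    (l.length % 2 = 0 → ∀ e ∈ B, ∀ a, l.getLast? = some a → a ∉ e) →
    (l.length % 2 = 1 → ∀ e ∈ A, ∀ a, l.getLast? = some a → a ∉ e) →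
    Walk2 A B l
  | [], _, _, hne, _, _, _, _ => absurd rfl hne
  | [v], A, B, _, _, _, _, hodd => by
      intro e he hv
      exact hodd rfl e he v rfl hv
  | (u :: v :: t), A, B, _, hdiag, hidx, heven, hodd => by
      have hpe : (0:ℕ) < (pathEdges (u :: v :: t)).length := by
        rw [pathEdges_cons]; simp
      have h0 := hidx 0 hpe
      rw [if_pos rfl] at h0
      have hg0 : (pathEdges (u :: v :: t))[0]'hpe = s(u, v) := by
        simp [pathEdges_cons]
      rw [hg0] at h0
      have huv : u ≠ v := by
        have := hdiag s(u,v) (by rw [pathEdges_cons]; exact List.mem_cons_self)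
        simpa [Sym2.mk_isDiag_iff] using this
      refine ⟨h0, huv, ?_⟩
      apply Walk2.ofIndexed (v :: t) B A (by simp)
      · intro e he
        exact hdiag e (by rw [pathEdges_cons]; exact List.mem_cons_of_mem _ he)
      · intro i hi
        have hi2 : i + 1 < (pathEdges (u :: v :: t)).length := by
          rw [pathEdges_cons]; simpa using hi
        have hh := hidx (i+1) hi2
        have hge : (pathEdges (u :: v :: t))[i+1]'hi2 = (pathEdges (v :: t))[i]'hi := by
          simp [pathEdges_cons]
        rw [hge] at hh
        rcases Nat.mod_two_eq_zero_or_one i with h2 | h2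
        · rw [if_neg (by omega : ¬ (i+1) % 2 = 0)] at hh
          rw [if_pos h2]; exact hh
        · rw [if_pos (by omega : (i+1) % 2 = 0)] at hh
          rw [if_neg (by simp [h2])]; exact hh
      · intro hpar e he a ha
        have : (u :: v :: t).length % 2 = 1 := by
          have : (u :: v :: t).length = (v :: t).length + 1 := rfl
          omega
        exact hodd this e he a (by rw [List.getLast?_cons_cons]; exact ha)
      · intro hpar e he a ha
        have : (u :: v :: t).length % 2 = 0 := by
          have : (u :: v :: t).length = (v :: t).length + 1 := rfl
          omega
        exact heven this e he a (by rw [List.getLast?_cons_cons]; exact ha)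

lemma Walk2.shrink {A' B' : Finset (Sym2 V)} {l : List V} (h : Walk2 A B l)
    (hA : ∀ e ∈ pathEdges l, e ∈ A → e ∈ A') (hB : ∀ e ∈ pathEdges l, e ∈ B → e ∈ B')
    (hA' : A' ⊆ A) (hB' : B' ⊆ B) : Walk2 A' B' l := by
  induction l generalizing A B A' B' with
  | nil => exact absurd h (by simp [Walk2])
  | cons u t ih =>
    match t with
    | [] => exact fun e he => h e (hA' he)
    | v :: t' =>
      obtain ⟨h1, huv, h3⟩ := h
      have hmem : s(u,v) ∈ pathEdges (u :: v :: t') := by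
        rw [pathEdges_cons]; exact List.mem_cons_self
      refine ⟨Finset.mem_sdiff.2 ⟨hA _ hmem (Finset.mem_sdiff.1 h1).1,
        fun hb => (Finset.mem_sdiff.1 h1).2 (hB' hb)⟩, huv, ?_⟩
      exact ih h3 (fun e he hb => hB e (by rw [pathEdges_cons]; exact List.mem_cons_of_mem _ he) hb)
        (fun e he hb => hA e (by rw [pathEdges_cons]; exact List.mem_cons_of_mem _ he) hb) hB' hA'

lemma Walk2.grow {A' B' : Finset (Sym2 V)} {l : List V} (h : Walk2 A B l)
    (hA : A ⊆ A') (hB : B ⊆ B')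
    (hedge : ∀ e ∈ pathEdges l, (e ∈ A' → e ∈ A) ∧ (e ∈ B' → e ∈ B))
    (hlast : ∀ x, l.getLast? = some x → ∀ e, ((e ∈ A' ∧ e ∉ A) ∨ (e ∈ B' ∧ e ∉ B)) → x ∉ e) :
    Walk2 A' B' l := by
  induction l generalizing A B A' B' with
  | nil => exact absurd h (by simp [Walk2])
  | cons u t ih =>
    match t with
    | [] =>
      intro e he hv
      by_cases hea : e ∈ A
      · exact h e hea hv
      · exact hlast u (by simp) e (Or.inl ⟨he, hea⟩) hv
    | v :: t' =>
      obtain ⟨h1, huv, h3⟩ := h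
      rw [Finset.mem_sdiff] at h1
      have hm : s(u,v) ∈ pathEdges (u :: v :: t') := by
        rw [pathEdges_cons]; exact List.mem_cons_self
      refine ⟨Finset.mem_sdiff.2 ⟨hA h1.1, fun hb => h1.2 ((hedge _ hm).2 hb)⟩, huv, ?_⟩
      refine ih h3 hB hA (fun e he => ?_) (fun x hx e hor => ?_)
      · have hmem : e ∈ pathEdges (u :: v :: t') := by
          rw [pathEdges_cons]; exact List.mem_cons_of_mem _ he
        exact ⟨(hedge e hmem).2, (hedge e hmem).1⟩
      · exact hlast x (by rw [List.getLast?_cons_cons]; exact hx) e (Or.symm hor)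

lemma Walk2.card_eq {l : List V} (h : Walk2 A B l) (hnd : l.Nodup) :
    ((pathEdges l).toFinset \ B).card = ((pathEdges l).toFinset ∩ B).card + (l.length + 1) % 2 := by
  induction l generalizing A B with
  | nil => exact absurd h (by simp [Walk2])
  | cons u t ih =>
    match t with
    | [] => simp [pathEdges_single]
    | v :: t' =>
      obtain ⟨h1, huv, h3⟩ := h
      rw [Finset.mem_sdiff] at h1
      have hnotin : s(u,v) ∉ (pathEdges (v :: t')).toFinset := by
        intro hmem
        rw [List.mem_toFinset] at hmem
        exact (List.nodup_cons.1 hnd).1 (vertex_mem_of_mem_pathEdges hmem (Sym2.mem_mk_left _ _))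
      have hpe : (pathEdges (u :: v :: t')).toFinset
          = insert s(u,v) (pathEdges (v :: t')).toFinset := by
        rw [pathEdges_cons]; simp
      set P' := (pathEdges (v :: t')).toFinset with hP'
      have hPA : P' \ A = P' ∩ B := by
        ext e
        simp only [Finset.mem_sdiff, Finset.mem_inter]
        constructor
        · rintro ⟨hp, hna⟩
          refine ⟨hp, ?_⟩
          rcases Finset.mem_union.1 (h3.edges_subset e (List.mem_toFinset.1 hp)) with hh | hh
          · exact (Finset.mem_sdiff.1 hh).1
          · exact absurd (Finset.mem_sdiff.1 hh).1 hna
        · rintro ⟨hp, hb⟩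
          refine ⟨hp, fun hna => ?_⟩
          rcases Finset.mem_union.1 (h3.edges_subset e (List.mem_toFinset.1 hp)) with hh | hh
          · exact (Finset.mem_sdiff.1 hh).2 hna
          · exact (Finset.mem_sdiff.1 hh).2 hb
      have hPB : P' ∩ A = P' \ B := by
        ext e
        simp only [Finset.mem_sdiff, Finset.mem_inter]
        constructor
        · rintro ⟨hp, ha⟩
          refine ⟨hp, fun hb => ?_⟩
          rcases Finset.mem_union.1 (h3.edges_subset e (List.mem_toFinset.1 hp)) with hh | hh
          · exact (Finset.mem_sdiff.1 hh).2 ha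
          · exact (Finset.mem_sdiff.1 hh).2 hb
        · rintro ⟨hp, hb⟩
          refine ⟨hp, ?_⟩
          rcases Finset.mem_union.1 (h3.edges_subset e (List.mem_toFinset.1 hp)) with hh | hh
          · exact absurd (Finset.mem_sdiff.1 hh).1 hb
          · exact (Finset.mem_sdiff.1 hh).1
      have IH := ih h3 (List.nodup_cons.1 hnd).2
      rw [hPA, hPB] at IH
      -- IH : (P' ∩ B).card = (P' \ B).card + ((v :: t').length + 1) % 2
      rw [hpe]
      have hs1 : insert s(u,v) P' \ B = insert s(u,v) (P' \ B) := by
        rw [Finset.insert_sdiff_of_notMem _ h1.2]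
      have hs2 : insert s(u,v) P' ∩ B = P' ∩ B := by
        ext e
        simp only [Finset.mem_inter, Finset.mem_insert]
        constructor
        · rintro ⟨rfl | hp, hb⟩
          · exact absurd hb h1.2
          · exact ⟨hp, hb⟩
        · rintro ⟨hp, hb⟩; exact ⟨Or.inr hp, hb⟩
      rw [hs1, hs2, Finset.card_insert_of_notMem (fun hmem => hnotin (Finset.mem_sdiff.1 hmem).1)]
      have hlen : (u :: v :: t').length = (v :: t').length + 1 := rfl
      omega

lemma Walk2.componentA : ∀ (l : List V) (A B : Finset (Sym2 V)), Walk2 A B l →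
    (∀ e ∈ A, ∀ f ∈ A, e ≠ f → ∀ v, v ∈ e → v ∉ f) →
    ∀ x ∈ l, ∀ g ∈ A, x ∈ g → g ∈ pathEdges l
  | [], A, B, h, _ => absurd h (by simp [Walk2])
  | [v], A, B, h, _ => by
      intro x hx g hg hxg
      simp only [List.mem_singleton] at hx; subst hx
      exact absurd hxg (h g hg)
  | (u :: v :: t), A, B, h, hA => by
      obtain ⟨h1, huv, h3⟩ := h
      rw [Finset.mem_sdiff] at h1
      intro x hx g hg hxg
      have he0 : s(u,v) ∈ pathEdges (u :: v :: t) := by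
        rw [pathEdges_cons]; exact List.mem_cons_self
      have key : ∀ y, y ∈ s(u,v) → y ∈ g → g ∈ pathEdges (u :: v :: t) := by
        intro y hy1 hy2
        by_cases hge : g = s(u,v)
        · rw [hge]; exact he0
        · exact absurd hy2 (hA s(u,v) h1.1 g hg (fun hh => hge hh.symm) y hy1)
      rcases List.mem_cons.1 hx with rfl | hx' 
      · exact key x (Sym2.mem_mk_left _ _) hxg
      rcases List.mem_cons.1 hx' with rfl | hx''
      · exact key x (Sym2.mem_mk_right _ _) hxg
      · match t, hx'' with
        | w :: t'', hx'' =>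
          obtain ⟨hf1, hvw, h4⟩ := h3
          have := Walk2.componentA (w :: t'') A B h4 hA x hx'' g hg hxg
          rw [pathEdges_cons, pathEdges_cons]
          exact List.mem_cons_of_mem _ (List.mem_cons_of_mem _ this)

lemma Walk2.componentB : ∀ (l : List V) (A B : Finset (Sym2 V)), Walk2 A B l →
    (∀ e ∈ B, ∀ f ∈ B, e ≠ f → ∀ v, v ∈ e → v ∉ f) →
    ∀ x ∈ l, ∀ g ∈ B, x ∈ g → g ∈ pathEdges l ∨ l.head? = some x
  | [], A, B, h, _ => absurd h (by simp [Walk2])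
  | [v], A, B, h, _ => by
      intro x hx g hg hxg
      simp only [List.mem_singleton] at hx; subst hx
      exact Or.inr rfl
  | (u :: v :: t), A, B, h, hB => by
      obtain ⟨h1, huv, h3⟩ := h
      intro x hx g hg hxg
      rcases List.mem_cons.1 hx with hxu | hx'
      · exact Or.inr (by simp [hxu])
      match t with
      | [] =>
        simp only [List.mem_singleton] at hx'; subst hx'
        exact absurd hxg (h3 g hg)
      | w :: t'' =>
        obtain ⟨hf1, hvw, h4⟩ := h3
        rw [Finset.mem_sdiff] at hf1
        have keyf : ∀ y, y ∈ s(v,w) → y ∈ g → g ∈ pathEdges (u :: v :: w :: t'') := by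
          intro y hy1 hy2
          by_cases hge : g = s(v,w)
          · rw [hge, pathEdges_cons]
            exact List.mem_cons_of_mem _ (by rw [pathEdges_cons]; exact List.mem_cons_self)
          · exact absurd hy2 (hB s(v,w) hf1.1 g hg (fun hh => hge hh.symm) y hy1)
        rcases List.mem_cons.1 hx' with hxv | hx''
        · exact Or.inl (keyf x (by rw [hxv]; exact Sym2.mem_mk_left _ _) hxg)
        · rcases Walk2.componentB (w :: t'') A B h4 hB x hx'' g hg hxg with hc | hc
          · refine Or.inl ?_
            rw [pathEdges_cons, pathEdges_cons]
            exact List.mem_cons_of_mem _ (List.mem_cons_of_mem _ hc)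
          · have hxw : x = w := by simpa using hc.symm
            exact Or.inl (keyf x (by rw [hxw]; exact Sym2.mem_mk_right _ _) hxg)

lemma Walk2.share : ∀ (l : List V) (A B : Finset (Sym2 V)), Walk2 A B l → l.Nodup →
    ∀ e ∈ pathEdges l, ∀ f ∈ pathEdges l, e ≠ f → ∀ x, x ∈ e → x ∈ f → (e ∈ B ↔ f ∉ B)
  | [], A, B, h, _ => absurd h (by simp [Walk2])
  | [v], A, B, h, _ => by intro e he; simp [pathEdges_single] at he
  | (u :: v :: t), A, B, h, hnd => by
      obtain ⟨h1, huv, h3⟩ := h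
      rw [Finset.mem_sdiff] at h1
      have tail_case : ∀ f', f' ∈ pathEdges (v :: t) → ∀ y, y ∈ s(u,v) → y ∈ f' →
          (f' ∈ B ∧ s(u,v) ∉ B) := by
        intro f' hf' y hy1 hy2
        rcases Sym2.mem_iff.1 hy1 with hyu | hyv
        · rw [hyu] at hy2
          exact absurd (vertex_mem_of_mem_pathEdges hf' hy2) (List.nodup_cons.1 hnd).1
        · rw [hyv] at hy2
          cases t with
          | nil => simp [pathEdges_single] at hf'
          | cons w t'' =>
            have hfeq : f' = s(v, w) :=
              head_edge_unique (List.nodup_cons.1 hnd).2 hf' hy2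
            obtain ⟨hf1, _, _⟩ := h3
            rw [Finset.mem_sdiff] at hf1
            rw [hfeq]
            exact ⟨hf1.1, h1.2⟩
      intro e he f hf hef x hxe hxf
      rw [pathEdges_cons, List.mem_cons] at he hf
      rcases he with heq | he'
      · rcases hf with hfq | hf'
        · exact absurd (heq.trans hfq.symm) hef
        · obtain ⟨hfB, heB⟩ := tail_case f hf' x (heq ▸ hxe) hxf
          rw [heq]
          constructor
          · intro hb; exact absurd hb heB
          · intro hnb; exact absurd hfB hnb
      · rcases hf with hfq | hf'
        · obtain ⟨heB, hfB⟩ := tail_case e he' x (hfq ▸ hxf) hxe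
          rw [hfq]
          simp [heB, hfB]
        · have IH := Walk2.share (v :: t) B A h3 (List.nodup_cons.1 hnd).2 e he' f hf' hef x hxe hxf
          have hes := h3.edges_subset e he'
          have hfs := h3.edges_subset f hf'
          rw [Finset.mem_union, Finset.mem_sdiff, Finset.mem_sdiff] at hes hfs
          tauto
lemma head?_mem {l : List V} {a : V} (h : l.head? = some a) : a ∈ l := by
  cases l with
  | nil => simp at h
  | cons b t => simp only [List.head?_cons, Option.some_inj] at h; simp [h.symm]

lemma getLast?_mem {l : List V} {a : V} (h : l.getLast? = some a) : a ∈ l := by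
  induction l with
  | nil => simp at h
  | cons b t ih =>
    cases t with
    | nil => simp_all
    | cons c t' => rw [List.getLast?_cons_cons] at h; exact List.mem_cons_of_mem _ (ih h)

lemma altWeight_eq {l : List V} (hnd : (pathEdges l).Nodup) (W : Sym2 V → ℤ) (B : Finset (Sym2 V)) :
    altWeight W B l
      = wt W ((pathEdges l).toFinset \ B) - wt W ((pathEdges l).toFinset ∩ B) := by
  classical
  unfold altWeight wt
  rw [← List.sum_toFinset _ hnd]
  rw [← Finset.sum_filter_add_sum_filter_not (pathEdges l).toFinset (· ∈ B)]
  have h1 : (pathEdges l).toFinset.filter (· ∈ B) = (pathEdges l).toFinset ∩ B := by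
    ext e; simp
  have h2 : (pathEdges l).toFinset.filter (fun e => ¬ e ∈ B) = (pathEdges l).toFinset \ B := by
    ext e; simp
  rw [h1, h2]
  have h3 : ∑ e ∈ (pathEdges l).toFinset ∩ B, (if e ∈ B then -W e else W e)
      = -∑ e ∈ (pathEdges l).toFinset ∩ B, W e := by
    rw [← Finset.sum_neg_distrib]
    exact Finset.sum_congr rfl (fun e he => if_pos (Finset.mem_inter.1 he).2)
  have h4 : ∑ e ∈ (pathEdges l).toFinset \ B, (if e ∈ B then -W e else W e)
      = ∑ e ∈ (pathEdges l).toFinset \ B, W e :=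
    Finset.sum_congr rfl (fun e he => if_neg (Finset.mem_sdiff.1 he).2)
  rw [h3, h4]; ring

/-- The endpoints of an edge, as a finset. -/
def eVerts (e : Sym2 V) : Finset V :=
  Quot.liftOn e (fun p => {p.1, p.2}) (by
    rintro ⟨a, b⟩ ⟨c, d⟩ h
    cases h with
    | refl => rfl
    | swap => exact Finset.pair_comm a b)

lemma mem_eVerts {e : Sym2 V} {x : V} : x ∈ eVerts e ↔ x ∈ e := by
  induction e using Sym2.ind with
  | _ a b =>
    show x ∈ ({a, b} : Finset V) ↔ _
    simp [Sym2.mem_iff]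

lemma card_eVerts {e : Sym2 V} (h : ¬ e.IsDiag) : (eVerts e).card = 2 := by
  induction e using Sym2.ind with
  | _ a b =>
    rw [Sym2.mk_isDiag_iff] at h
    show ({a, b} : Finset V).card = 2
    rw [Finset.card_insert_of_notMem (by simp [h]), Finset.card_singleton]

lemma exists_uncovered (hE : ∀ e ∈ E, ¬ e.IsDiag) (hM : IsMatching E M) (hMk : IsMatching E Mk)
    (hcard : Mk.card < M.card) : ∃ u, (∃ e ∈ M, u ∈ e) ∧ ∀ e ∈ Mk, u ∉ e := by
  by_contra hcon
  push_neg at hcon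
  have hverts : ∀ (N : Finset (Sym2 V)), IsMatching E N → (N.biUnion eVerts).card = 2 * N.card := by
    intro N hN
    rw [Finset.card_biUnion (fun e he f hf hef => Finset.disjoint_left.2
      (by intro x hx hx2; exact hN.2 e he f hf hef x (mem_eVerts.1 hx) (mem_eVerts.1 hx2)))]
    rw [Finset.sum_congr rfl (fun e he => card_eVerts (hE e (hN.1 he)))]
    simp [Finset.sum_const, mul_comm]
  have hsub : M.biUnion eVerts ⊆ Mk.biUnion eVerts := by
    intro x hx
    rw [Finset.mem_biUnion] at hx
    obtain ⟨e, he, hxe⟩ := hx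
    obtain ⟨f, hf, hxf⟩ := hcon x ⟨e, he, mem_eVerts.1 hxe⟩
    exact Finset.mem_biUnion.2 ⟨f, hf, mem_eVerts.2 hxf⟩
  have := Finset.card_le_card hsub
  rw [hverts M hM, hverts Mk hMk] at this
  omega

lemma walk_exists : ∀ (n : ℕ) (M Mk : Finset (Sym2 V)) (u₀ : V),
    IsMatching E M → IsMatching E Mk → (∀ e ∈ E, ¬ e.IsDiag) → Mk.card ≤ n →
    (∃ e ∈ M, u₀ ∈ e) → (∀ e ∈ Mk, u₀ ∉ e) →
    ∃ l, Walk2 M Mk l ∧ l.Nodup ∧ l.head? = some u₀ ∧ 2 ≤ l.length := by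
  intro n
  induction n using Nat.strong_induction_on with
  | _ n ih =>
  intro M Mk u₀ hM hMk hE hn hcov hunc
  obtain ⟨e₀, he₀, hu₀⟩ := hcov
  obtain ⟨v₁, he₀v⟩ := Sym2.mem_iff_exists.mp hu₀
  have hne : u₀ ≠ v₁ := by
    have := hE e₀ (hM.1 he₀); rw [he₀v] at this; simpa [Sym2.mk_isDiag_iff] using this
  have hv₁e₀ : v₁ ∈ e₀ := by rw [he₀v]; exact Sym2.mem_mk_right _ _
  have hu₀e₀ : u₀ ∈ e₀ := hu₀
  have he₀Mk : e₀ ∉ Mk := fun h => hunc e₀ h hu₀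
  by_cases hv₁ : ∃ f ∈ Mk, v₁ ∈ f
  case neg =>
    push_neg at hv₁
    refine ⟨[u₀, v₁], ⟨?_, hne, fun f hf => hv₁ f hf⟩, by simp [hne], rfl, by simp⟩
    rw [← he₀v]; exact Finset.mem_sdiff.2 ⟨he₀, he₀Mk⟩
  case pos =>
    obtain ⟨f₁, hf₁Mk, hv₁f⟩ := hv₁
    obtain ⟨u₁, hf₁v⟩ := Sym2.mem_iff_exists.mp hv₁f
    have hnev : v₁ ≠ u₁ := by
      have := hE f₁ (hMk.1 hf₁Mk); rw [hf₁v] at this; simpa [Sym2.mk_isDiag_iff] using this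
    have hu₁f₁ : u₁ ∈ f₁ := by rw [hf₁v]; exact Sym2.mem_mk_right _ _
    have hne2 : e₀ ≠ f₁ := fun h => he₀Mk (h ▸ hf₁Mk)
    have hf₁M : f₁ ∉ M := fun hfM => hM.2 e₀ he₀ f₁ hfM hne2 v₁ hv₁e₀ hv₁f
    have hu₁u₀ : u₁ ≠ u₀ := fun h => hunc f₁ hf₁Mk (h ▸ hu₁f₁)
    have hu₁e₀ : u₁ ∉ e₀ := by
      rw [he₀v, Sym2.mem_iff]
      push_neg
      exact ⟨hu₁u₀, fun h => hnev h.symm⟩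
    by_cases hu₁ : ∃ e ∈ M, u₁ ∈ e
    case neg =>
      push_neg at hu₁
      refine ⟨[u₀, v₁, u₁], ⟨?_, hne, ?_, hnev, fun e he => hu₁ e he⟩, ?_, rfl, by simp⟩
      · rw [← he₀v]; exact Finset.mem_sdiff.2 ⟨he₀, he₀Mk⟩
      · rw [← hf₁v]; exact Finset.mem_sdiff.2 ⟨hf₁Mk, hf₁M⟩
      · simp [hne, hnev, (Ne.symm hu₁u₀ : u₀ ≠ u₁)]
    case pos =>
      obtain ⟨e₁, he₁, hu₁e⟩ := hu₁
      have hcard1 : 1 ≤ Mk.card := Finset.card_pos.2 ⟨f₁, hf₁Mk⟩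
      obtain ⟨l', hw', hnd', hhead', hlen'⟩ := ih (Mk.card - 1) (by omega)
        (M.erase e₀) (Mk.erase f₁) u₁
        (matching_subset (Finset.erase_subset _ _) hM)
        (matching_subset (Finset.erase_subset _ _) hMk) hE
        (by rw [Finset.card_erase_of_mem hf₁Mk])
        ⟨e₁, Finset.mem_erase.2 ⟨fun h => hu₁e₀ (h ▸ hu₁e), he₁⟩, hu₁e⟩
        (fun f hf hu₁f => hMk.2 f₁ hf₁Mk f (Finset.mem_erase.1 hf).2
          (fun h => (Finset.mem_erase.1 hf).1 h.symm) u₁ hu₁f₁ hu₁f)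
      have hu₀l : u₀ ∉ l' := by
        intro hmem
        obtain ⟨e, he, hxe⟩ := exists_pathEdge_of_mem hmem hlen'
        rcases Finset.mem_union.1 (hw'.edges_subset e he) with hh | hh
        · obtain ⟨heM, -⟩ := Finset.mem_sdiff.1 hh
          obtain ⟨hee₀, heM'⟩ := Finset.mem_erase.1 heM
          exact hM.2 e heM' e₀ he₀ hee₀ u₀ hxe hu₀e₀
        · obtain ⟨heMk, -⟩ := Finset.mem_sdiff.1 hh
          exact hunc e (Finset.mem_erase.1 heMk).2 hxe
      have hv₁l : v₁ ∉ l' := by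
        intro hmem
        obtain ⟨e, he, hxe⟩ := exists_pathEdge_of_mem hmem hlen'
        rcases Finset.mem_union.1 (hw'.edges_subset e he) with hh | hh
        · obtain ⟨heM, -⟩ := Finset.mem_sdiff.1 hh
          obtain ⟨hee₀, heM'⟩ := Finset.mem_erase.1 heM
          exact hM.2 e heM' e₀ he₀ hee₀ v₁ hxe hv₁e₀
        · obtain ⟨heMk, -⟩ := Finset.mem_sdiff.1 hh
          obtain ⟨hef₁, heMk'⟩ := Finset.mem_erase.1 heMk
          exact hMk.2 e heMk' f₁ hf₁Mk hef₁ v₁ hxe hv₁f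
      obtain ⟨rest, rfl⟩ : ∃ rest, l' = u₁ :: rest := by
        cases l' with
        | nil => simp at hhead'
        | cons a t =>
          simp only [List.head?_cons, Option.some_inj] at hhead'
          exact ⟨t, by rw [hhead']⟩
      have hrestne : rest ≠ [] := by
        intro h; subst h; simp at hlen'
      have hwalk : Walk2 M Mk (u₁ :: rest) := by
        apply hw'.grow (Finset.erase_subset _ _) (Finset.erase_subset _ _)
        · intro e he
          constructor
          · intro heM
            refine Finset.mem_erase.2 ⟨fun hcon => ?_, heM⟩
            subst hcon
            exact hu₀l (vertex_mem_of_mem_pathEdges he (he₀v ▸ Sym2.mem_mk_left _ _))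
          · intro heMk
            refine Finset.mem_erase.2 ⟨fun hcon => ?_, heMk⟩
            subst hcon
            exact hv₁l (vertex_mem_of_mem_pathEdges he (hf₁v ▸ Sym2.mem_mk_left _ _))
        · intro x hx e hor hxe
          have hxrest : x ∈ rest := by
            cases rest with
            | nil => exact absurd rfl hrestne
            | cons b t => rw [List.getLast?_cons_cons] at hx; exact getLast?_mem hx
          have hxu₁ : x ≠ u₁ := fun h => (List.nodup_cons.1 hnd').1 (h ▸ hxrest)
          rcases hor with ⟨heM, heM'⟩ | ⟨heMk, heMk'⟩
          · have hee₀ : e = e₀ := by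
              by_contra hcon
              exact heM' (Finset.mem_erase.2 ⟨hcon, heM⟩)
            subst hee₀
            rw [he₀v, Sym2.mem_iff] at hxe
            rcases hxe with rfl | rfl
            · exact hu₀l (List.mem_cons_of_mem _ hxrest)
            · exact hv₁l (List.mem_cons_of_mem _ hxrest)
          · have hef₁ : e = f₁ := by
              by_contra hcon
              exact heMk' (Finset.mem_erase.2 ⟨hcon, heMk⟩)
            subst hef₁
            rw [hf₁v, Sym2.mem_iff] at hxe
            rcases hxe with rfl | rfl
            · exact hv₁l (List.mem_cons_of_mem _ hxrest)
            · exact hxu₁ rfl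
      refine ⟨u₀ :: v₁ :: u₁ :: rest, ⟨?_, hne, ?_, hnev, hwalk⟩, ?_, rfl, by simp⟩
      · rw [← he₀v]; exact Finset.mem_sdiff.2 ⟨he₀, he₀Mk⟩
      · rw [← hf₁v]; exact Finset.mem_sdiff.2 ⟨hf₁Mk, hf₁M⟩
      · refine List.nodup_cons.2 ⟨?_, List.nodup_cons.2 ⟨hv₁l, hnd'⟩⟩
        intro hmem
        rcases List.mem_cons.1 hmem with h | h
        · exact hne h
        · exact hu₀l h
lemma aug_walk_exists : ∀ (n : ℕ) (M Mk : Finset (Sym2 V)),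
    IsMatching E M → IsMatching E Mk → (∀ e ∈ E, ¬ e.IsDiag) → Mk.card ≤ n →
    M.card = Mk.card + 1 →
    ∃ l, Walk2 M Mk l ∧ l.Nodup ∧ l.length % 2 = 0 ∧
      (∀ e ∈ Mk, ∀ a, l.head? = some a → a ∉ e) := by
  intro n
  induction n using Nat.strong_induction_on with
  | _ n ih =>
  intro M Mk hM hMk hE hn hcard
  obtain ⟨u₀, hcov, hunc⟩ := exists_uncovered hE hM hMk (by omega)
  obtain ⟨l, hw, hnd, hhead, hlen⟩ := walk_exists Mk.card M Mk u₀ hM hMk hE le_rfl hcov hunc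
  have hheadcond : ∀ e ∈ Mk, ∀ a, l.head? = some a → a ∉ e := by
    intro e he a ha
    have hau : a = u₀ := by rw [hhead] at ha; exact (Option.some_inj.1 ha).symm
    subst hau
    exact hunc e he
  have keyQvert : ∀ x ∈ l, ∀ g ∈ M ∪ Mk, x ∈ g → g ∈ pathEdges l := by
    intro x hx g hg hxg
    rcases Finset.mem_union.1 hg with hgM | hgMk
    · exact Walk2.componentA l M Mk hw hM.2 x hx g hgM hxg
    · rcases Walk2.componentB l M Mk hw hMk.2 x hx g hgMk hxg with h | h
      · exact h
      · have hxu : u₀ = x := Option.some_inj.1 (hhead.symm.trans h)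
        subst hxu
        exact absurd hxg (hunc g hgMk)
  by_cases hpar : l.length % 2 = 0
  · exact ⟨l, hw, hnd, hpar, hheadcond⟩
  · obtain ⟨u, v, w, rest, rfl⟩ : ∃ u v w rest, l = u :: v :: w :: rest := by
      rcases l with _ | ⟨u, _ | ⟨v, _ | ⟨w, rest⟩⟩⟩
      · simp at hlen
      · simp at hlen
      · simp at hpar
      · exact ⟨u, v, w, rest, rfl⟩
    obtain ⟨h1, hne1, hf1, hne2, h4⟩ := hw
    have hw : Walk2 M Mk (u :: v :: w :: rest) := ⟨h1, hne1, hf1, hne2, h4⟩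
    set Q := u :: v :: w :: rest with hQdef
    set P := (pathEdges Q).toFinset with hPdef
    have hPD : ∀ e ∈ P, e ∈ (M \ Mk) ∪ (Mk \ M) :=
      fun e he => hw.edges_subset e (List.mem_toFinset.1 he)
    have hMP : M ∩ P = P \ Mk := by
      ext e
      simp only [Finset.mem_inter, Finset.mem_sdiff]
      constructor
      · rintro ⟨heM, heP⟩
        refine ⟨heP, fun heMk => ?_⟩
        rcases Finset.mem_union.1 (hPD e heP) with h | h
        · exact (Finset.mem_sdiff.1 h).2 heMk
        · exact (Finset.mem_sdiff.1 h).2 heM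
      · rintro ⟨heP, heMk⟩
        refine ⟨?_, heP⟩
        rcases Finset.mem_union.1 (hPD e heP) with h | h
        · exact (Finset.mem_sdiff.1 h).1
        · exact absurd (Finset.mem_sdiff.1 h).1 heMk
    have hcountP := hw.card_eq hnd
    rw [← hPdef] at hcountP
    have hpar0 : (Q.length + 1) % 2 = 0 := by omega
    rw [hpar0] at hcountP
    have hc1 := Finset.card_sdiff_add_card_inter M P
    have hc2 := Finset.card_sdiff_add_card_inter Mk P
    have hMPcard : (M ∩ P).card = (P \ Mk).card := by rw [hMP]
    have hMkPcard : (Mk ∩ P).card = (P ∩ Mk).card := by rw [Finset.inter_comm]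
    have hvw : s(v, w) ∈ Mk ∩ P := by
      refine Finset.mem_inter.2 ⟨(Finset.mem_sdiff.1 hf1).1, List.mem_toFinset.2 ?_⟩
      rw [hQdef, pathEdges_cons, pathEdges_cons]
      exact List.mem_cons_of_mem _ (List.mem_cons_self)
    have hMkplt : 1 ≤ (Mk ∩ P).card := Finset.card_pos.2 ⟨s(v, w), hvw⟩
    have hM2card : (M \ P).card = (Mk \ P).card + 1 := by omega
    have hMk2lt : (Mk \ P).card < Mk.card := by omega
    obtain ⟨l₂, hw₂, hnd₂, hpar₂, hhc₂⟩ := ih (Mk \ P).card (by omega) (M \ P) (Mk \ P)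
      (matching_subset (Finset.sdiff_subset) hM)
      (matching_subset (Finset.sdiff_subset) hMk) hE le_rfl hM2card
    have hl₂len : 2 ≤ l₂.length := by
      have h0 : 0 < l₂.length := List.length_pos_iff.2 hw₂.ne_nil
      omega
    have keyQ : ∀ x ∈ l₂, ∀ g ∈ P, x ∉ g := by
      intro x hx g hg hxg
      obtain ⟨e', he', hxe'⟩ := exists_pathEdge_of_mem hx hl₂len
      have he'D := hw₂.edges_subset e' he'
      have he'notP : e' ∉ P ∧ e' ∈ M ∪ Mk := by
        rcases Finset.mem_union.1 he'D with h | h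
        · have h2 := Finset.mem_sdiff.1 (Finset.mem_sdiff.1 h).1
          exact ⟨h2.2, Finset.mem_union_left _ h2.1⟩
        · have h2 := Finset.mem_sdiff.1 (Finset.mem_sdiff.1 h).1
          exact ⟨h2.2, Finset.mem_union_right _ h2.1⟩
      have hxQ : x ∈ Q := vertex_mem_of_mem_pathEdges (List.mem_toFinset.1 hg) hxg
      exact he'notP.1 (List.mem_toFinset.2 (keyQvert x hxQ e' he'notP.2 hxe'))
    have hpe_notP : ∀ e ∈ pathEdges l₂, e ∉ P := by
      intro e he heP
      induction e using Sym2.ind with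
      | _ a b =>
        exact keyQ a (vertex_mem_of_mem_pathEdges he (Sym2.mem_mk_left _ _)) _ heP
          (Sym2.mem_mk_left _ _)
    have hw₂' : Walk2 M Mk l₂ := by
      apply hw₂.grow Finset.sdiff_subset Finset.sdiff_subset
      · intro e he
        constructor
        · intro heM; exact Finset.mem_sdiff.2 ⟨heM, hpe_notP e he⟩
        · intro heMk; exact Finset.mem_sdiff.2 ⟨heMk, hpe_notP e he⟩
      · intro x hx e hor hxe
        have hxl₂ : x ∈ l₂ := getLast?_mem hx
        have heP : e ∈ P := by
          rcases hor with ⟨he1, he2⟩ | ⟨he1, he2⟩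
          · by_contra hcon; exact he2 (Finset.mem_sdiff.2 ⟨he1, hcon⟩)
          · by_contra hcon; exact he2 (Finset.mem_sdiff.2 ⟨he1, hcon⟩)
        exact keyQ x hxl₂ e heP hxe
    refine ⟨l₂, hw₂', hnd₂, hpar₂, ?_⟩
    intro e he a ha
    by_cases heMk₂ : e ∈ Mk \ P
    · exact hhc₂ e heMk₂ a ha
    · have heP : e ∈ P := by
        by_contra hcon; exact heMk₂ (Finset.mem_sdiff.2 ⟨he, hcon⟩)
      exact keyQ a (head?_mem ha) e heP

lemma newmatch {l : List V} (hw : Walk2 A B l) (hnd : l.Nodup) (hlen : l.length % 2 = 0)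
    (hBm : IsMatching E B) (hhead : ∀ e ∈ B, ∀ a, l.head? = some a → a ∉ e)
    (hpeE : ∀ e ∈ pathEdges l, e ∈ E) (W : Sym2 V → ℤ) :
    IsMatching E ((B \ (pathEdges l).toFinset) ∪ ((pathEdges l).toFinset \ B))
    ∧ ((B \ (pathEdges l).toFinset) ∪ ((pathEdges l).toFinset \ B)).card = B.card + 1
    ∧ wt W ((B \ (pathEdges l).toFinset) ∪ ((pathEdges l).toFinset \ B))
        = wt W B + altWeight W B l := by
  classical
  set P := (pathEdges l).toFinset with hPdef
  have hdisj : Disjoint (B \ P) (P \ B) := by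
    rw [Finset.disjoint_left]
    intro e h1 h2
    exact (Finset.mem_sdiff.1 h2).2 (Finset.mem_sdiff.1 h1).1
  have hcompB : ∀ x ∈ l, ∀ g ∈ B, x ∈ g → g ∈ pathEdges l := by
    intro x hx g hg hxg
    rcases Walk2.componentB l A B hw hBm.2 x hx g hg hxg with h | h
    · exact h
    · exact absurd hxg (hhead g hg x h)
  refine ⟨⟨?_, ?_⟩, ?_, ?_⟩
  · intro e he
    rcases Finset.mem_union.1 he with h | h
    · exact hBm.1 (Finset.mem_sdiff.1 h).1
    · exact hpeE e (List.mem_toFinset.1 (Finset.mem_sdiff.1 h).1)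
  · intro e he f hf hef x hxe hxf
    rcases Finset.mem_union.1 he with heB | heP <;> rcases Finset.mem_union.1 hf with hfB | hfP
    · exact hBm.2 e (Finset.mem_sdiff.1 heB).1 f (Finset.mem_sdiff.1 hfB).1 hef x hxe hxf
    · have hxl : x ∈ l :=
        vertex_mem_of_mem_pathEdges (List.mem_toFinset.1 (Finset.mem_sdiff.1 hfP).1) hxf
      exact (Finset.mem_sdiff.1 heB).2
        (List.mem_toFinset.2 (hcompB x hxl e (Finset.mem_sdiff.1 heB).1 hxe))
    · have hxl : x ∈ l :=
        vertex_mem_of_mem_pathEdges (List.mem_toFinset.1 (Finset.mem_sdiff.1 heP).1) hxe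
      exact (Finset.mem_sdiff.1 hfB).2
        (List.mem_toFinset.2 (hcompB x hxl f (Finset.mem_sdiff.1 hfB).1 hxf))
    · have hsh := Walk2.share l A B hw hnd e (List.mem_toFinset.1 (Finset.mem_sdiff.1 heP).1)
        f (List.mem_toFinset.1 (Finset.mem_sdiff.1 hfP).1) hef x hxe hxf
      exact (Finset.mem_sdiff.1 heP).2 (hsh.2 (Finset.mem_sdiff.1 hfP).2)
  · have hcard1 := hw.card_eq hnd
    rw [← hPdef] at hcard1
    have h2 : (l.length + 1) % 2 = 1 := by omega
    rw [h2] at hcard1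
    have h3 := Finset.card_sdiff_add_card_inter B P
    rw [Finset.inter_comm] at h3
    rw [Finset.card_union_of_disjoint hdisj]
    omega
  · have hw1 : wt W ((B \ P) ∪ (P \ B)) = wt W (B \ P) + wt W (P \ B) :=
      Finset.sum_union hdisj
    have hw2 : wt W (B \ P) + wt W (B ∩ P) = wt W B := by
      have h := Finset.sum_sdiff (f := W) (Finset.inter_subset_left : B ∩ P ⊆ B)
      rw [show B \ (B ∩ P) = B \ P from by ext a; simp] at h
      exact h
    have hw3 := altWeight_eq (pathEdges_nodup hnd) W B
    rw [Finset.inter_comm] at hw2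
    unfold wt at *
    rw [hw1]
    rw [← hPdef] at hw3
    linarith
  
lemma symmdiff_inv (B P : Finset (Sym2 V)) :
    (B \ ((B \ P) ∪ (P \ B))) ∪ (((B \ P) ∪ (P \ B)) \ B) = P := by
  ext e
  by_cases h1 : e ∈ B <;> by_cases h2 : e ∈ P <;> simp [h1, h2]
lemma augpath_matching (hE : ∀ e ∈ E, ¬ e.IsDiag) (hMkm : IsMatching E Mk) {l : List V}
    (ha : IsAugPath E Mk l) (W : Sym2 V → ℤ) :
    IsMatching E ((Mk \ (pathEdges l).toFinset) ∪ ((pathEdges l).toFinset \ Mk))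
    ∧ ((Mk \ (pathEdges l).toFinset) ∪ ((pathEdges l).toFinset \ Mk)).card = Mk.card + 1
    ∧ wt W ((Mk \ (pathEdges l).toFinset) ∪ ((pathEdges l).toFinset \ Mk))
        = wt W Mk + altWeight W Mk l := by
  obtain ⟨hlen, hnd, hpeE, hparE, hidx, hends⟩ := ha
  have hlenpe := pathEdges_length l
  have hlpar : l.length % 2 = 0 := by omega
  have hne : l ≠ [] := by intro h; subst h; simp at hlen
  have hw : Walk2 ((pathEdges l).toFinset \ Mk) Mk l := by
    apply Walk2.ofIndexed l _ Mk hne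
    · intro e he; exact hE e (hpeE e he)
    · intro i hi
      have hm := hidx i hi
      have hp : (pathEdges l)[i] ∈ (pathEdges l).toFinset :=
        List.mem_toFinset.2 (List.getElem_mem hi)
      rcases Nat.mod_two_eq_zero_or_one i with h2 | h2
      · rw [if_pos h2]
        have hnotMk : (pathEdges l)[i] ∉ Mk := fun hmm => by have := hm.1 hmm; omega
        exact Finset.mem_sdiff.2 ⟨Finset.mem_sdiff.2 ⟨hp, hnotMk⟩, hnotMk⟩
      · rw [if_neg (by simp [h2])]
        have hinMk : (pathEdges l)[i] ∈ Mk := hm.2 h2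
        exact Finset.mem_sdiff.2 ⟨hinMk, fun hmem => (Finset.mem_sdiff.1 hmem).2 hinMk⟩
    · intro _ e he a ha'
      exact (hends e he).2 a ha'
    · intro hodd; exfalso; omega
  have hheadc : ∀ e ∈ Mk, ∀ a, l.head? = some a → a ∉ e := fun e he a ha' => (hends e he).1 a ha'
  exact newmatch hw hnd hlpar hMkm hheadc hpeE W

lemma decomp (hE : ∀ e ∈ E, ¬ e.IsDiag) (hM : IsMatching E M)
    {k : ℕ} {W : Sym2 V → ℤ} (hIso : Isolates W E k Mk) (hcard : M.card = k + 1) :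
    ∃ l, IsAugPath E Mk l ∧
      IsMatching E ((Mk \ (pathEdges l).toFinset) ∪ ((pathEdges l).toFinset \ Mk)) ∧
      ((Mk \ (pathEdges l).toFinset) ∪ ((pathEdges l).toFinset \ Mk)).card = k + 1 ∧
      wt W ((Mk \ (pathEdges l).toFinset) ∪ ((pathEdges l).toFinset \ Mk))
        = wt W Mk + altWeight W Mk l ∧
      wt W ((Mk \ (pathEdges l).toFinset) ∪ ((pathEdges l).toFinset \ Mk)) ≤ wt W M ∧
      (wt W ((Mk \ (pathEdges l).toFinset) ∪ ((pathEdges l).toFinset \ Mk)) = wt W M →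
        M = (Mk \ (pathEdges l).toFinset) ∪ ((pathEdges l).toFinset \ Mk)) := by
  classical
  obtain ⟨hMkm, hkcard, hmin⟩ := hIso
  obtain ⟨l, hw, hnd, hpar, hheadc⟩ := aug_walk_exists Mk.card M Mk hM hMkm hE le_rfl (by omega)
  have hlen2 : 2 ≤ l.length := by
    have h0 : 0 < l.length := List.length_pos_iff.2 hw.ne_nil
    omega
  have hpeE : ∀ e ∈ pathEdges l, e ∈ E := by
    intro e he
    rcases Finset.mem_union.1 (hw.edges_subset e he) with h | h
    · exact hM.1 (Finset.mem_sdiff.1 h).1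
    · exact hMkm.1 (Finset.mem_sdiff.1 h).1
  have hlastc := (hw.last_cond).1 hpar
  have hlenpe := pathEdges_length l
  have haug : IsAugPath E Mk l := by
    refine ⟨hlen2, hnd, hpeE, by omega, ?_, ?_⟩
    · intro i hi
      have hid := hw.indexed i hi
      rcases Nat.mod_two_eq_zero_or_one i with h2 | h2
      · rw [if_pos h2] at hid
        constructor
        · intro hm; exact absurd hm (Finset.mem_sdiff.1 hid).2
        · intro h1; exfalso; omega
      · rw [if_neg (by simp [h2])] at hid
        exact ⟨fun _ => h2, fun _ => (Finset.mem_sdiff.1 hid).1⟩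
    · intro e he
      exact ⟨fun a ha => hheadc e he a ha, fun a ha => hlastc e he a ha⟩
  obtain ⟨hφm, hφcard, hφwt⟩ := newmatch hw hnd hpar hMkm hheadc hpeE W
  set P := (pathEdges l).toFinset with hPdef
  set D := (M \ Mk) ∪ (Mk \ M) with hDdef
  set R := D \ P with hRdef
  have hPD : ∀ e ∈ P, e ∈ D := fun e he => hw.edges_subset e (List.mem_toFinset.1 he)
  have hDE : ∀ e ∈ D, e ∈ E := by
    intro e he
    rcases Finset.mem_union.1 he with h | h
    · exact hM.1 (Finset.mem_sdiff.1 h).1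
    · exact hMkm.1 (Finset.mem_sdiff.1 h).1
  have hdisj : ∀ f ∈ D, f ∉ P → ∀ x, x ∈ f → ∀ e ∈ P, x ∉ e := by
    intro f hfD hfP x hxf e heP hxe
    have hxl : x ∈ l := vertex_mem_of_mem_pathEdges (List.mem_toFinset.1 heP) hxe
    rcases Finset.mem_union.1 hfD with h | h
    · exact hfP (List.mem_toFinset.2
        (Walk2.componentA l M Mk hw hM.2 x hxl f (Finset.mem_sdiff.1 h).1 hxf))
    · rcases Walk2.componentB l M Mk hw hMkm.2 x hxl f (Finset.mem_sdiff.1 h).1 hxf with hc | hc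
      · exact hfP (List.mem_toFinset.2 hc)
      · exact hheadc f (Finset.mem_sdiff.1 h).1 x hc hxf
  have hRM : ∀ e ∈ R \ Mk, e ∈ M := by
    intro e he
    obtain ⟨heR, heMk⟩ := Finset.mem_sdiff.1 he
    obtain ⟨heD, -⟩ := Finset.mem_sdiff.1 heR
    rcases Finset.mem_union.1 heD with h | h
    · exact (Finset.mem_sdiff.1 h).1
    · exact absurd (Finset.mem_sdiff.1 h).1 heMk
  have hmix : ∀ e ∈ R \ Mk, ∀ f ∈ Mk \ R, e ≠ f → ∀ x, x ∈ e → x ∈ f → False := by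
    intro e he f hf hef x hxe hxf
    obtain ⟨heR, heMk⟩ := Finset.mem_sdiff.1 he
    obtain ⟨heD, heP⟩ := Finset.mem_sdiff.1 heR
    have heM : e ∈ M := hRM e he
    obtain ⟨hfMk, hfR⟩ := Finset.mem_sdiff.1 hf
    by_cases hfM : f ∈ M
    · exact hM.2 e heM f hfM hef x hxe hxf
    · have hfD : f ∈ D := Finset.mem_union_right _ (Finset.mem_sdiff.2 ⟨hfMk, hfM⟩)
      have hfP : f ∈ P := by
        by_contra hcon
        exact hfR (Finset.mem_sdiff.2 ⟨hfD, hcon⟩)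
      exact hdisj e heD heP x hxe f hfP hxf
  have hN'm : IsMatching E ((Mk \ R) ∪ (R \ Mk)) := by
    constructor
    · intro e he
      rcases Finset.mem_union.1 he with h | h
      · exact hMkm.1 (Finset.mem_sdiff.1 h).1
      · exact hDE e (Finset.mem_sdiff.1 (Finset.mem_sdiff.1 h).1).1
    · intro e he f hf hef x hxe hxf
      rcases Finset.mem_union.1 he with he' | he' <;> rcases Finset.mem_union.1 hf with hf' | hf'
      · exact hMkm.2 e (Finset.mem_sdiff.1 he').1 f (Finset.mem_sdiff.1 hf').1 hef x hxe hxf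
      · exact hmix f hf' e he' (Ne.symm hef) x hxf hxe
      · exact hmix e he' f hf' hef x hxe hxf
      · exact hM.2 e (hRM e he') f (hRM f hf') hef x hxe hxf
  -- set identities
  have hPMsub : P \ Mk ⊆ M \ Mk := by
    intro e he
    obtain ⟨heP, heMk⟩ := Finset.mem_sdiff.1 he
    rcases Finset.mem_union.1 (hPD e heP) with h | h
    · exact h
    · exact absurd (Finset.mem_sdiff.1 h).1 heMk
  have hPKsub : P ∩ Mk ⊆ Mk \ M := by
    intro e he
    obtain ⟨heP, heMk⟩ := Finset.mem_inter.1 he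
    rcases Finset.mem_union.1 (hPD e heP) with h | h
    · exact absurd heMk (Finset.mem_sdiff.1 h).2
    · exact h
  have hRMk : R \ Mk = (M \ Mk) \ (P \ Mk) := by
    ext e
    simp only [hRdef, Finset.mem_sdiff, hDdef, Finset.mem_union]
    constructor
    · rintro ⟨⟨hD, hP⟩, hMk⟩
      rcases hD with h | h
      · exact ⟨h, fun hc => hP hc.1⟩
      · exact absurd h.1 hMk
    · rintro ⟨⟨heM, heMk⟩, hnP⟩
      refine ⟨⟨Or.inl ⟨heM, heMk⟩, fun hP => hnP ⟨hP, heMk⟩⟩, heMk⟩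
  have hRK : R ∩ Mk = (Mk \ M) \ (P ∩ Mk) := by
    ext e
    simp only [hRdef, Finset.mem_sdiff, hDdef, Finset.mem_union, Finset.mem_inter]
    constructor
    · rintro ⟨⟨hD, hP⟩, hMk⟩
      rcases hD with h | h
      · exact absurd hMk h.2
      · exact ⟨h, fun hc => hP hc.1⟩
    · rintro ⟨⟨heMk, heM⟩, hnP⟩
      exact ⟨⟨Or.inr ⟨heMk, heM⟩, fun hP => hnP ⟨hP, heMk⟩⟩, heMk⟩
  -- cardinalities
  have hcount := hw.card_eq hnd
  rw [← hPdef] at hcount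
  have hpar1 : (l.length + 1) % 2 = 1 := by omega
  rw [hpar1] at hcount
  have hc1 := Finset.card_sdiff_add_card_inter M Mk
  have hc2 := Finset.card_sdiff_add_card_inter Mk M
  have hcc : (Mk ∩ M).card = (M ∩ Mk).card := by rw [Finset.inter_comm]
  have hrm : (R \ Mk).card = (M \ Mk).card - (P \ Mk).card := by
    rw [hRMk, Finset.card_sdiff_of_subset hPMsub]
  have hrk : (R ∩ Mk).card = (Mk \ M).card - (P ∩ Mk).card := by
    rw [hRK, Finset.card_sdiff_of_subset hPKsub]
  have hle1 : (P \ Mk).card ≤ (M \ Mk).card := Finset.card_le_card hPMsub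
  have hle2 : (P ∩ Mk).card ≤ (Mk \ M).card := Finset.card_le_card hPKsub
  have hc3 := Finset.card_sdiff_add_card_inter Mk R
  have hcc2 : (Mk ∩ R).card = (R ∩ Mk).card := by rw [Finset.inter_comm]
  have hN'disj : Disjoint (Mk \ R) (R \ Mk) := by
    rw [Finset.disjoint_left]
    intro e h1 h2
    exact (Finset.mem_sdiff.1 h1).2 (Finset.mem_sdiff.1 h2).1
  have hN'card : ((Mk \ R) ∪ (R \ Mk)).card = k := by
    rw [Finset.card_union_of_disjoint hN'disj]
    omega
  -- weights
  have hwM : wt W (M \ Mk) + wt W (M ∩ Mk) = wt W M := by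
    have h := Finset.sum_sdiff (f := W) (Finset.inter_subset_left : M ∩ Mk ⊆ M)
    rw [show M \ (M ∩ Mk) = M \ Mk from by ext a; simp] at h
    exact h
  have hwMk : wt W (Mk \ M) + wt W (M ∩ Mk) = wt W Mk := by
    have h := Finset.sum_sdiff (f := W) (Finset.inter_subset_left : Mk ∩ M ⊆ Mk)
    rw [show Mk \ (Mk ∩ M) = Mk \ M from by ext a; simp,
        show Mk ∩ M = M ∩ Mk from Finset.inter_comm _ _] at h
    exact h
  have hsplit1 : wt W (R \ Mk) + wt W (P \ Mk) = wt W (M \ Mk) := by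
    have h := Finset.sum_sdiff (f := W) hPMsub
    rw [← hRMk] at h
    exact h
  have hsplit2 : wt W (R ∩ Mk) + wt W (P ∩ Mk) = wt W (Mk \ M) := by
    have h := Finset.sum_sdiff (f := W) hPKsub
    rw [← hRK] at h
    exact h
  have hAlt := altWeight_eq (pathEdges_nodup hnd) W Mk
  rw [← hPdef] at hAlt
  have hN'wt : wt W ((Mk \ R) ∪ (R \ Mk)) = wt W (Mk \ R) + wt W (R \ Mk) :=
    Finset.sum_union hN'disj
  have hwMkR : wt W (Mk \ R) + wt W (R ∩ Mk) = wt W Mk := by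
    have h := Finset.sum_sdiff (f := W) (Finset.inter_subset_left : Mk ∩ R ⊆ Mk)
    rw [show Mk \ (Mk ∩ R) = Mk \ R from by ext a; simp,
        show Mk ∩ R = R ∩ Mk from Finset.inter_comm _ _] at h
    exact h
  have hdelta : wt W M = wt W Mk + altWeight W Mk l
      + (wt W ((Mk \ R) ∪ (R \ Mk)) - wt W Mk) := by
    linarith
  by_cases hN' : (Mk \ R) ∪ (R \ Mk) = Mk
  · -- R is empty; M = φ
    have hRempty : R = ∅ := by
      rw [Finset.eq_empty_iff_forall_notMem]
      intro e heR
      by_cases heMk : e ∈ Mk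
      · have : e ∈ (Mk \ R) ∪ (R \ Mk) := by rw [hN']; exact heMk
        rcases Finset.mem_union.1 this with h | h
        · exact (Finset.mem_sdiff.1 h).2 heR
        · exact (Finset.mem_sdiff.1 h).2 heMk
      · have : e ∈ (Mk \ R) ∪ (R \ Mk) :=
          Finset.mem_union_right _ (Finset.mem_sdiff.2 ⟨heR, heMk⟩)
        rw [hN'] at this
        exact heMk this
    have hDP : ∀ e ∈ D, e ∈ P := by
      intro e heD
      by_contra hcon
      have : e ∈ R := Finset.mem_sdiff.2 ⟨heD, hcon⟩
      rw [hRempty] at this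
      simp at this
    have hMφ : M = (Mk \ P) ∪ (P \ Mk) := by
      ext e
      constructor
      · intro heM
        by_cases heMk : e ∈ Mk
        · refine Finset.mem_union_left _ (Finset.mem_sdiff.2 ⟨heMk, fun heP => ?_⟩)
          rcases Finset.mem_union.1 (hPD e heP) with h | h
          · exact (Finset.mem_sdiff.1 h).2 heMk
          · exact (Finset.mem_sdiff.1 h).2 heM
        · refine Finset.mem_union_right _ (Finset.mem_sdiff.2 ⟨?_, heMk⟩)
          exact hDP e (Finset.mem_union_left _ (Finset.mem_sdiff.2 ⟨heM, heMk⟩))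
      · intro heφ
        rcases Finset.mem_union.1 heφ with h | h
        · obtain ⟨heMk, heP⟩ := Finset.mem_sdiff.1 h
          by_contra heM
          exact heP (hDP e (Finset.mem_union_right _ (Finset.mem_sdiff.2 ⟨heMk, heM⟩)))
        · obtain ⟨heP, heMk⟩ := Finset.mem_sdiff.1 h
          rcases Finset.mem_union.1 (hPD e heP) with hh | hh
          · exact (Finset.mem_sdiff.1 hh).1
          · exact absurd (Finset.mem_sdiff.1 hh).1 heMk
    have hwN'0 : wt W ((Mk \ R) ∪ (R \ Mk)) = wt W Mk := by rw [hN']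
    refine ⟨l, haug, hφm, by rw [hφcard, hkcard], hφwt, by linarith, fun _ => hMφ⟩
  · have hlt : wt W Mk < wt W ((Mk \ R) ∪ (R \ Mk)) :=
      hmin _ hN'm hN'card hN'
    refine ⟨l, haug, hφm, by rw [hφcard, hkcard], hφwt, by linarith, fun heq => ?_⟩
    exfalso; linarith
end AuxLemmas

/-- Suppose `W` isolates the minimum-weight size-`k` matching `Mk` of a bipartite graph and
a matching of size `k+1` exists. Then `W` isolates a matching of size `k+1` (there is a
unique minimum-weight matching of size `k+1`) if and only if there is a unique
minimum-alternating-weight augmenting path with respect to `Mk` (unique as a set of edges). -/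
theorem isolation_iff_unique_min_augPath (E : Finset (Sym2 V)) (L : Finset V)
    (hbip : Bipartite E L) (W : Sym2 V → ℤ) (k : ℕ) (Mk : Finset (Sym2 V))
    (hMk : Isolates W E k Mk)
    (hex : ∃ M, IsMatching E M ∧ M.card = k + 1) :
    (∃ M, MinOfSize W E (k + 1) M ∧ ∀ M', MinOfSize W E (k + 1) M' → M' = M) ↔
      (∃ l, MinAugPath W E Mk l ∧
        ∀ l', MinAugPath W E Mk l' →
          (pathEdges l').toFinset = (pathEdges l).toFinset) := by
  classical
  have hMkm := hMk.1
  have hkcard := hMk.2.1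
  have hE : ∀ e ∈ E, ¬ e.IsDiag := by
    intro e he hdiag
    obtain ⟨u, hu, v, hv, rfl⟩ := hbip e he
    rw [Sym2.mk_isDiag_iff] at hdiag
    exact hv (hdiag ▸ hu)
  obtain ⟨Mex, hMexm, hMexc⟩ := hex
  set T := E.powerset.filter (fun N => IsMatching E N ∧ N.card = k + 1) with hT
  have hTmem : ∀ N : Finset (Sym2 V), N ∈ T ↔ (IsMatching E N ∧ N.card = k + 1) := by
    intro N
    rw [hT, Finset.mem_filter, Finset.mem_powerset]
    exact ⟨fun h => h.2, fun h => ⟨h.1.1, h⟩⟩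
  have hTne : T.Nonempty := ⟨Mex, (hTmem Mex).2 ⟨hMexm, hMexc⟩⟩
  obtain ⟨M₀, hM₀T, hM₀min⟩ := T.exists_min_image (wt W) hTne
  rw [hTmem M₀] at hM₀T
  have hM₀min' : MinOfSize W E (k + 1) M₀ :=
    ⟨hM₀T.1, hM₀T.2, fun M' h1 h2 => hM₀min M' ((hTmem M').2 ⟨h1, h2⟩)⟩
  obtain ⟨l₀, haug₀, hm₀, hc₀, hwt₀, hle₀, heq₀⟩ := decomp hE hM₀T.1 hMk hM₀T.2
  have hwtN₀ : wt W ((Mk \ (pathEdges l₀).toFinset) ∪ ((pathEdges l₀).toFinset \ Mk))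
      = wt W M₀ := le_antisymm hle₀ (hM₀min'.2.2 _ hm₀ hc₀)
  have hM₀eq : M₀ = (Mk \ (pathEdges l₀).toFinset) ∪ ((pathEdges l₀).toFinset \ Mk) :=
    heq₀ hwtN₀
  have hminaug₀ : MinAugPath W E Mk l₀ := by
    refine ⟨haug₀, fun l' hl' => ?_⟩
    obtain ⟨hm', hc', hwt'⟩ := augpath_matching hE hMkm hl' W
    have h1 : wt W M₀ ≤ wt W ((Mk \ (pathEdges l').toFinset) ∪ ((pathEdges l').toFinset \ Mk)) :=
      hM₀min'.2.2 _ hm' (by rw [hc', hkcard])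
    linarith
  constructor
  · rintro ⟨Mu, hMu, huniq⟩
    refine ⟨l₀, hminaug₀, ?_⟩
    intro l' hl'
    obtain ⟨hm', hc', hwt'⟩ := augpath_matching hE hMkm hl'.1 W
    have halt : altWeight W Mk l' = altWeight W Mk l₀ :=
      le_antisymm (hl'.2 l₀ haug₀) (hminaug₀.2 l' hl'.1)
    have hminN' : MinOfSize W E (k + 1)
        ((Mk \ (pathEdges l').toFinset) ∪ ((pathEdges l').toFinset \ Mk)) := by
      refine ⟨hm', by rw [hc', hkcard], fun M'' h1 h2 => ?_⟩
      have h3 : wt W M₀ ≤ wt W M'' := hM₀min'.2.2 M'' h1 h2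
      linarith
    have h1 : (Mk \ (pathEdges l').toFinset) ∪ ((pathEdges l').toFinset \ Mk) = Mu :=
      huniq _ hminN'
    have h2 : (Mk \ (pathEdges l₀).toFinset) ∪ ((pathEdges l₀).toFinset \ Mk) = Mu :=
      huniq _ (hM₀eq ▸ hM₀min')
    have hNN : (Mk \ (pathEdges l').toFinset) ∪ ((pathEdges l').toFinset \ Mk)
        = (Mk \ (pathEdges l₀).toFinset) ∪ ((pathEdges l₀).toFinset \ Mk) := h1.trans h2.symm
    calc (pathEdges l').toFinset
        = (Mk \ ((Mk \ (pathEdges l').toFinset) ∪ ((pathEdges l').toFinset \ Mk)))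
          ∪ (((Mk \ (pathEdges l').toFinset) ∪ ((pathEdges l').toFinset \ Mk)) \ Mk) :=
          (symmdiff_inv Mk _).symm
      _ = (Mk \ ((Mk \ (pathEdges l₀).toFinset) ∪ ((pathEdges l₀).toFinset \ Mk)))
          ∪ (((Mk \ (pathEdges l₀).toFinset) ∪ ((pathEdges l₀).toFinset \ Mk)) \ Mk) := by
          rw [hNN]
      _ = (pathEdges l₀).toFinset := symmdiff_inv Mk _
  · rintro ⟨l₁, hl₁, huniq⟩
    refine ⟨M₀, hM₀min', ?_⟩
    intro M' hM'
    obtain ⟨l', haug', hm', hc', hwt', hle', heq'⟩ := decomp hE hM'.1 hMk hM'.2.1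
    have hwtN' : wt W ((Mk \ (pathEdges l').toFinset) ∪ ((pathEdges l').toFinset \ Mk))
        = wt W M' := le_antisymm hle' (hM'.2.2 _ hm' hc')
    have hM'eq : M' = (Mk \ (pathEdges l').toFinset) ∪ ((pathEdges l').toFinset \ Mk) :=
      heq' hwtN'
    have hminaug' : MinAugPath W E Mk l' := by
      refine ⟨haug', fun l'' hl'' => ?_⟩
      obtain ⟨hm'', hc'', hwt''⟩ := augpath_matching hE hMkm hl'' W
      have h1 : wt W M' ≤ wt W ((Mk \ (pathEdges l'').toFinset) ∪ ((pathEdges l'').toFinset \ Mk)) :=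
        hM'.2.2 _ hm'' (by rw [hc'', hkcard])
      linarith
    have hP' := huniq l' hminaug'
    have hP0 := huniq l₀ hminaug₀
    rw [hM'eq, hM₀eq, hP', hP0]
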